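/- Let G be a finite group and ρ an irreducible representation of G on a finite-dimensional complex vector space W, with character χ(g) = tr(ρ(g)). If x ∈ G and λ ∈ ℂ satisfy Σ_{γ∈G} χ(gxγ)·χ(γ⁻¹) = λ · Σ_{γ∈G} χ(gγ)·χ(γ⁻¹) for every g ∈ G, then ρ(x) = μ·id_W for some μ ∈ ℂ, i.e. ρ(x) lies in the center of ρ(G). -/

import Mathlib

open scoped BigOperators

section Aux

variable {W : Type*} [AddCommGroup W] [Module ℂ W] [FiniteDimensional ℂ W]

/-- trace of `f ↦ a ∘ f ∘ b` on `End W` is `tr a * tr b`. -/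
lemma trace_mulLeft_comp_mulRight (a b : W →ₗ[ℂ] W) :
    LinearMap.trace ℂ (W →ₗ[ℂ] W)
        ((LinearMap.mulLeft ℂ a) ∘ₗ (LinearMap.mulRight ℂ b))
      = LinearMap.trace ℂ W a * LinearMap.trace ℂ W b := by
  set e := dualTensorHomEquiv ℂ W W
  have comp : ((LinearMap.mulLeft ℂ a) ∘ₗ (LinearMap.mulRight ℂ b)) ∘ₗ (e : TensorProduct ℂ (Module.Dual ℂ W) W →ₗ[ℂ] (W →ₗ[ℂ] W))
      = (e : TensorProduct ℂ (Module.Dual ℂ W) W →ₗ[ℂ] (W →ₗ[ℂ] W)) ∘ₗ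
        (TensorProduct.map (Module.Dual.transpose (R := ℂ) b) a) := by
    apply TensorProduct.ext'
    intro φ w
    ext y
    simp [e, dualTensorHomEquiv, Module.End.mul_apply, Module.Dual.transpose_apply]
  have key : (LinearMap.mulLeft ℂ a) ∘ₗ (LinearMap.mulRight ℂ b)
      = e.conj (TensorProduct.map (Module.Dual.transpose (R := ℂ) b) a) := by
    refine LinearMap.ext fun f => ?_
    have := LinearMap.congr_fun comp (e.symm f)
    simpa [LinearEquiv.conj_apply, LinearMap.mulLeft_apply, LinearMap.mulRight_apply] using this
  rw [key, LinearMap.trace_conj', LinearMap.trace_tensorProduct',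
    LinearMap.trace_transpose', mul_comm]

lemma trace_smulRight (φ : Module.Dual ℂ (W →ₗ[ℂ] W)) (m : W →ₗ[ℂ] W) :
    LinearMap.trace ℂ (W →ₗ[ℂ] W) (φ.smulRight m) = φ m := by
  have : φ.smulRight m = dualTensorHom ℂ (W →ₗ[ℂ] W) (W →ₗ[ℂ] W) (φ ⊗ₜ m) := by
    ext y
    simp
  rw [this, LinearMap.trace_eq_contract_apply, contractLeft_apply]

end Aux

lemma schur_scalar {G : Type*} [Group G]
    {W : Type*} [AddCommGroup W] [Module ℂ W] [FiniteDimensional ℂ W] [Nontrivial W]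
    (ρ : Representation ℂ G W)
    (hirr : ∀ p : Submodule ℂ W, (∀ g : G, ∀ x ∈ p, ρ g x ∈ p) → p = ⊥ ∨ p = ⊤)
    (B : W →ₗ[ℂ] W) (hB : ∀ g : G, ρ g * B = B * ρ g) :
    ∃ c : ℂ, B = c • (1 : W →ₗ[ℂ] W) := by
  obtain ⟨μ, hμ⟩ := Module.End.exists_eigenvalue (B : Module.End ℂ W)
  refine ⟨μ, ?_⟩
  have hmem : ∀ w : W, w ∈ LinearMap.ker (B - μ • 1) ↔ B w = μ • w := by
    intro w
    simp [LinearMap.mem_ker, sub_eq_zero, LinearMap.sub_apply]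
  have hker : ∀ g : G, ∀ w ∈ LinearMap.ker (B - μ • 1), ρ g w ∈ LinearMap.ker (B - μ • 1) := by
    intro g w hw
    rw [hmem] at hw ⊢
    have := congrArg (fun (f : W →ₗ[ℂ] W) => f w) (hB g)
    simp only [Module.End.mul_apply] at this
    rw [← this, hw, map_smul]
  rcases hirr _ hker with h | h
  · exfalso
    apply hμ
    have : Module.End.eigenspace B μ = ⊥ := by rw [Module.End.eigenspace_def]; exact h
    exact this
  · have : B - μ • 1 = 0 := LinearMap.ker_eq_top.mp h
    have := sub_eq_zero.mp this
    simpa using this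

/-- Key deduction of Section 2.2: for an irreducible representation `ρ` of a finite
group `G` on a finite-dimensional complex vector space `W` with character `χ`, if
`∑_γ χ(gxγ)·χ(γ⁻¹) = λ · ∑_γ χ(gγ)·χ(γ⁻¹)` for every `g ∈ G`, then `ρ x` is a scalar
multiple of the identity, i.e. `ρ x` is central in `ρ(G)`. -/
theorem central_of_translate_inner_products_proportional
    {G : Type*} [Group G] [Fintype G]
    {W : Type*} [AddCommGroup W] [Module ℂ W] [FiniteDimensional ℂ W] [Nontrivial W]
    (ρ : Representation ℂ G W)
    (hirr : ∀ p : Submodule ℂ W, (∀ g : G, ∀ x ∈ p, ρ g x ∈ p) → p = ⊥ ∨ p = ⊤)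
    (x : G) (l : ℂ)
    (hprop : ∀ g : G,
      (∑ γ : G, LinearMap.trace ℂ W (ρ (g * x * γ)) * LinearMap.trace ℂ W (ρ γ⁻¹))
        = l * ∑ γ : G, LinearMap.trace ℂ W (ρ (g * γ)) * LinearMap.trace ℂ W (ρ γ⁻¹)) :
    ∃ μ : ℂ, ρ x = μ • (1 : W →ₗ[ℂ] W) := by
  classical
  set χ : G → ℂ := fun g => LinearMap.trace ℂ W (ρ g) with hχ
  set d : ℂ := (Module.finrank ℂ W : ℂ) with hdd
  set n : ℂ := (Fintype.card G : ℂ) with hnn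
  have hn0 : n ≠ 0 := Nat.cast_ne_zero.mpr Fintype.card_ne_zero
  have hd0 : d ≠ 0 := Nat.cast_ne_zero.mpr Module.finrank_pos.ne'
  have hχ1 : χ 1 = d := by rw [hχ]; simp [LinearMap.trace_one, hdd]
  -- conjugation invariance of the character
  have hconj : ∀ g δ : G, χ (g * δ * g⁻¹) = χ δ := by
    intro g δ
    rw [hχ]
    simp only [map_mul]
    rw [LinearMap.trace_mul_cycle, ← map_mul, inv_mul_cancel, map_one, one_mul]
  set A : W →ₗ[ℂ] W := ∑ γ : G, χ γ⁻¹ • (ρ γ : W →ₗ[ℂ] W) with hA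
  have hAcomm : ∀ g : G, ρ g * A = A * ρ g := by
    intro g
    rw [hA, Finset.mul_sum, Finset.sum_mul]
    refine Fintype.sum_equiv ((Equiv.mulLeft g).trans (Equiv.mulRight g⁻¹)) _ _ ?_
    intro γ
    simp only [Equiv.trans_apply, Equiv.coe_mulLeft, Equiv.coe_mulRight]
    rw [mul_smul_comm, smul_mul_assoc, ← map_mul, ← map_mul]
    have h1 : g * γ * g⁻¹ * g = g * γ := by group
    have h2 : (g * γ * g⁻¹)⁻¹ = g * γ⁻¹ * g⁻¹ := by group
    rw [h1, h2, hconj]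
  obtain ⟨c, hAc⟩ := schur_scalar ρ hirr A hAcomm
  -- the convolution identity
  have hsum : ∀ g : G, (∑ γ : G, χ (g * γ) * χ γ⁻¹) = c * χ g := by
    intro g
    have h1 : ρ g * A = c • ρ g := by
      rw [hAc, mul_smul_comm, mul_one]
    have h2 : LinearMap.trace ℂ W (ρ g * A) = c * χ g := by
      rw [h1, map_smul, smul_eq_mul, hχ]
    rw [← h2, hA, Finset.mul_sum, map_sum]
    refine Finset.sum_congr rfl fun γ _ => ?_
    have hterm : ρ g * (χ γ⁻¹ • ρ γ) = χ γ⁻¹ • (ρ (g * γ) : W →ₗ[ℂ] W) := by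
      rw [mul_smul_comm, map_mul]
    rw [hterm, map_smul, smul_eq_mul, mul_comm]
  -- the averaging operator on End(W)
  set Φ : (W →ₗ[ℂ] W) →ₗ[ℂ] (W →ₗ[ℂ] W) :=
      ∑ γ : G, (LinearMap.mulLeft ℂ (ρ γ : W →ₗ[ℂ] W)) ∘ₗ
        (LinearMap.mulRight ℂ (ρ γ⁻¹ : W →ₗ[ℂ] W)) with hΦ
  have hΦapply : ∀ f : W →ₗ[ℂ] W, Φ f = ∑ γ : G, ρ γ * f * ρ γ⁻¹ := by
    intro f
    rw [hΦ, LinearMap.sum_apply]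
    refine Finset.sum_congr rfl fun γ _ => ?_
    simp [LinearMap.mulLeft_apply, LinearMap.mulRight_apply, mul_assoc]
  have hΦcomm : ∀ (f : W →ₗ[ℂ] W) (g : G), ρ g * Φ f = Φ f * ρ g := by
    intro f g
    rw [hΦapply, Finset.mul_sum, Finset.sum_mul]
    refine Fintype.sum_equiv (Equiv.mulLeft g) _ _ ?_
    intro γ
    simp only [Equiv.coe_mulLeft]
    have h2 : (g * γ)⁻¹ = γ⁻¹ * g⁻¹ := by group
    have h3 : (ρ γ⁻¹ * ρ g⁻¹) * ρ g = (ρ γ⁻¹ : W →ₗ[ℂ] W) := by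
      rw [mul_assoc, ← map_mul, inv_mul_cancel, map_one, mul_one]
    rw [h2, map_mul, map_mul, mul_assoc (ρ g * ρ γ * f), h3]
    try noncomm_ring
  have hΦtr : ∀ f : W →ₗ[ℂ] W, LinearMap.trace ℂ W (Φ f) = n * LinearMap.trace ℂ W f := by
    intro f
    rw [hΦapply, map_sum]
    have : ∀ γ : G, LinearMap.trace ℂ W (ρ γ * f * ρ γ⁻¹) = LinearMap.trace ℂ W f := by
      intro γ
      rw [LinearMap.trace_mul_comm, ← mul_assoc, ← map_mul, inv_mul_cancel, map_one, one_mul]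
    simp only [this, Finset.sum_const, Finset.card_univ, nsmul_eq_mul, hnn]
  have hΦform : Φ = (LinearMap.trace ℂ W).smulRight ((n / d) • (1 : W →ₗ[ℂ] W)) := by
    refine LinearMap.ext fun f => ?_
    obtain ⟨cf, hcf⟩ := schur_scalar ρ hirr (Φ f) (fun g => hΦcomm f g)
    have htr : cf * d = n * LinearMap.trace ℂ W f := by
      have h1 := hΦtr f
      rw [hcf, map_smul, smul_eq_mul, LinearMap.trace_one] at h1
      rw [← hdd] at h1
      exact h1
    have hcfval : cf = LinearMap.trace ℂ W f * (n / d) := by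
      field_simp
      rw [mul_comm (LinearMap.trace ℂ W f) n]
      exact htr
    rw [hcf, LinearMap.smulRight_apply, hcfval, smul_smul]
  have htrΦ : LinearMap.trace ℂ (W →ₗ[ℂ] W) Φ = n := by
    rw [hΦform, trace_smulRight, map_smul, LinearMap.trace_one, ← hdd, smul_eq_mul,
      div_mul_cancel₀ _ hd0]
  have htrΦ' : LinearMap.trace ℂ (W →ₗ[ℂ] W) Φ = ∑ γ : G, χ γ * χ γ⁻¹ := by
    rw [hΦ, map_sum]
    exact Finset.sum_congr rfl fun γ _ => trace_mulLeft_comp_mulRight _ _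
  have hsum1 : (∑ γ : G, χ γ * χ γ⁻¹) = c * d := by
    have := hsum 1
    simpa [one_mul, hχ1] using this
  have hcd : c * d = n := by
    rw [← hsum1, ← htrΦ']
    exact htrΦ
  have hc0 : c ≠ 0 := by
    intro hc
    apply hn0
    rw [← hcd, hc, zero_mul]
  -- translate relation for the character
  have hrel : ∀ g : G, χ (g * x) = l * χ g := by
    intro g
    have h1 := hprop g
    have h2 : (∑ γ : G, χ (g * x * γ) * χ γ⁻¹) = c * χ (g * x) := hsum (g * x)
    rw [hχ] at h2 ⊢
    rw [h2, hsum g] at h1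
    have h3 : c * LinearMap.trace ℂ W (ρ (g * x))
        = c * (l * LinearMap.trace ℂ W (ρ g)) := by
      rw [h1, hχ]; ring
    exact mul_left_cancel₀ hc0 h3
  -- two evaluations of the twisted sum
  have hE1 : (∑ g : G, χ (g * x) • (ρ g⁻¹ : W →ₗ[ℂ] W)) = (l * c) • (1 : W →ₗ[ℂ] W) := by
    have e1 : (∑ g : G, χ (g * x) • (ρ g⁻¹ : W →ₗ[ℂ] W))
        = l • ∑ g : G, χ g • (ρ g⁻¹ : W →ₗ[ℂ] W) := by
      rw [Finset.smul_sum]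
      refine Finset.sum_congr rfl fun g _ => ?_
      rw [hrel g, mul_smul]
    have e2 : (∑ g : G, χ g • (ρ g⁻¹ : W →ₗ[ℂ] W)) = A := by
      rw [hA]
      refine Fintype.sum_equiv (Equiv.inv G) _ _ ?_
      intro g
      simp
    rw [e1, e2, hAc, smul_smul]
  have hE2 : (∑ g : G, χ (g * x) • (ρ g⁻¹ : W →ₗ[ℂ] W)) = c • (ρ x : W →ₗ[ℂ] W) := by
    have e3 : (ρ x : W →ₗ[ℂ] W) * A = ∑ g : G, χ (g * x) • (ρ g⁻¹ : W →ₗ[ℂ] W) := by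
      rw [hA, Finset.mul_sum]
      refine Fintype.sum_equiv ((Equiv.inv G).trans (Equiv.mulRight x⁻¹)) _ _ ?_
      intro γ
      simp only [Equiv.trans_apply, Equiv.inv_apply, Equiv.coe_mulRight]
      rw [mul_smul_comm, ← map_mul]
      have h1 : γ⁻¹ * x⁻¹ * x = γ⁻¹ := by group
      have h2 : (γ⁻¹ * x⁻¹)⁻¹ = x * γ := by group
      rw [h1, h2]
    rw [← e3, hAc, mul_smul_comm, mul_one]
  refine ⟨l, ?_⟩
  have hfin : c • (ρ x : W →ₗ[ℂ] W) = c • (l • (1 : W →ₗ[ℂ] W)) := by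
    rw [← hE2, hE1, smul_smul, mul_comm l c]
  exact smul_right_injective (W →ₗ[ℂ] W) hc0 hfin
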